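/- Let w : (0,∞) → (0,∞) be increasing with w(y)/log y → ∞ as y → ∞, and let F̄ : (0,∞) → [0,∞) be a complementary distribution function of a nonnegative random variable X (so F̄(y) = P(X ≥ y)). Define p̂_w = sup{ p ≥ 0 : ∫₀^∞ F̄(u) e^{p w(u)} du < ∞ } and p̃_w = sup{ p ≥ 0 : E[e^{p w(X)}] < ∞ }. Then p̃_w ≤ p̂_w. -/

import Mathlib

open Filter MeasureTheory

theorem ptilde_le_phat {Ω : Type*} [MeasurableSpace Ω] (μ : Measure Ω)
    [IsProbabilityMeasure μ] (X : Ω → ℝ) (hX : Measurable X) (hXnonneg : ∀ ω, 0 ≤ X ω)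
    (w : ℝ → ℝ) (hwpos : ∀ y > 0, 0 < w y) (hwmono : StrictMonoOn w (Set.Ioi 0))
    (hwlog : Tendsto (fun y => w y / Real.log y) atTop atTop) :
    sSup (ENNReal.ofReal ''
        {p : ℝ | 0 ≤ p ∧ (∫⁻ ω, ENNReal.ofReal (Real.exp (p * w (X ω))) ∂μ) < ⊤})
      ≤ sSup (ENNReal.ofReal ''
          {p : ℝ | 0 ≤ p ∧
            (∫⁻ u in Set.Ioi (0 : ℝ),
              ENNReal.ofReal (Real.exp (p * w u)) * μ {ω | u ≤ X ω}) < ⊤}) := by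
  apply sSup_le
  rintro x ⟨p, ⟨hp0, hpfin⟩, rfl⟩
  set C := ∫⁻ ω, ENNReal.ofReal (Real.exp (p * w (X ω))) ∂μ with hCdef
  -- Chernoff bound
  have chern : ∀ u : ℝ, 0 < u →
      ENNReal.ofReal (Real.exp (p * w u)) * μ {ω | u ≤ X ω} ≤ C := by
    intro u hu
    have hs : MeasurableSet {ω | u ≤ X ω} := hX measurableSet_Ici
    rw [← lintegral_indicator_const hs (ENNReal.ofReal (Real.exp (p * w u)))]
    apply lintegral_mono
    intro ω
    by_cases hω : ω ∈ {ω | u ≤ X ω}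
    · rw [Set.indicator_of_mem hω]
      apply ENNReal.ofReal_le_ofReal
      apply Real.exp_le_exp.2
      have hXω : X ω ∈ Set.Ioi (0:ℝ) := lt_of_lt_of_le hu hω
      have hw : w u ≤ w (X ω) := hwmono.monotoneOn hu hXω hω
      exact mul_le_mul_of_nonneg_left hw hp0
    · rw [Set.indicator_of_notMem hω]; exact zero_le
  have key : ∀ q : ℝ, 0 ≤ q → q < p →
      (∫⁻ u in Set.Ioi (0:ℝ),
        ENNReal.ofReal (Real.exp (q * w u)) * μ {ω | u ≤ X ω}) < ⊤ := by
    intro q hq0 hqp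
    set r := p - q with hrdef
    have hrpos : 0 < r := by simp [hrdef]; linarith
    obtain ⟨M₀, hM₀⟩ := eventually_atTop.1 (hwlog.eventually_ge_atTop (2 / r))
    set M := max M₀ 2 with hMdef
    have hM1 : (1:ℝ) < M := lt_of_lt_of_le one_lt_two (le_max_right _ _)
    have hM0 : (0:ℝ) < M := lt_trans one_pos hM1
    have bound2 : ∀ u : ℝ, M ≤ u → Real.exp ((q - p) * w u) ≤ u ^ (-2 : ℝ) := by
      intro u hu
      have hu1 : 1 < u := lt_of_lt_of_le hM1 hu
      have hu0 : 0 < u := lt_trans one_pos hu1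
      have hlog : 0 < Real.log u := Real.log_pos hu1
      have h1 : 2 / r * Real.log u ≤ w u :=
        (le_div_iff₀ hlog).1 (hM₀ u (le_trans (le_max_left _ _) hu))
      have h2 : 2 * Real.log u ≤ r * w u := by
        have := mul_le_mul_of_nonneg_left h1 hrpos.le
        calc 2 * Real.log u = r * (2 / r * Real.log u) := by field_simp
          _ ≤ r * w u := this
      rw [Real.rpow_def_of_pos hu0]
      apply Real.exp_le_exp.2
      nlinarith
    have hsplit : Set.Ioi (0:ℝ) = Set.Ioc 0 M ∪ Set.Ioi M :=
      (Set.Ioc_union_Ioi_eq_Ioi hM0.le).symm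
    rw [hsplit, lintegral_union measurableSet_Ioi (Set.Ioc_disjoint_Ioi le_rfl)]
    apply ENNReal.add_lt_top.2
    constructor
    · -- piece on (0, M]
      calc ∫⁻ u in Set.Ioc 0 M, ENNReal.ofReal (Real.exp (q * w u)) * μ {ω | u ≤ X ω}
          ≤ ∫⁻ _ in Set.Ioc 0 M, C := by
            apply setLIntegral_mono measurable_const
            intro u hu
            refine le_trans ?_ (chern u hu.1)
            apply mul_le_mul_left
            apply ENNReal.ofReal_le_ofReal
            apply Real.exp_le_exp.2
            exact mul_le_mul_of_nonneg_right hqp.le (hwpos u hu.1).le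
        _ = C * volume (Set.Ioc 0 M) := setLIntegral_const _ _
        _ < ⊤ := ENNReal.mul_lt_top hpfin (by rw [Real.volume_Ioc]; exact ENNReal.ofReal_lt_top)
    · -- piece on (M, ∞)
      have hmeas : Measurable (fun u : ℝ => ENNReal.ofReal (u ^ (-2:ℝ)) * C) :=
        ((measurable_id.pow_const _).ennreal_ofReal).mul_const C
      calc ∫⁻ u in Set.Ioi M, ENNReal.ofReal (Real.exp (q * w u)) * μ {ω | u ≤ X ω}
          ≤ ∫⁻ u in Set.Ioi M, ENNReal.ofReal (u ^ (-2:ℝ)) * C := by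
            apply setLIntegral_mono hmeas
            intro u hu
            have hu0 : 0 < u := lt_trans hM0 hu
            have heq : ENNReal.ofReal (Real.exp (q * w u)) =
                ENNReal.ofReal (Real.exp ((q - p) * w u)) *
                  ENNReal.ofReal (Real.exp (p * w u)) := by
              rw [← ENNReal.ofReal_mul (Real.exp_nonneg _), ← Real.exp_add]
              ring_nf
            rw [heq, mul_assoc]
            calc ENNReal.ofReal (Real.exp ((q - p) * w u)) *
                  (ENNReal.ofReal (Real.exp (p * w u)) * μ {ω | u ≤ X ω})
                ≤ ENNReal.ofReal (Real.exp ((q - p) * w u)) * C :=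
                  mul_le_mul_right (chern u hu0) _
              _ ≤ ENNReal.ofReal (u ^ (-2:ℝ)) * C :=
                  mul_le_mul_left (ENNReal.ofReal_le_ofReal (bound2 u hu.le)) _
        _ = (∫⁻ u in Set.Ioi M, ENNReal.ofReal (u ^ (-2:ℝ))) * C :=
            lintegral_mul_const _ ((measurable_id.pow_const _).ennreal_ofReal)
        _ < ⊤ := ENNReal.mul_lt_top
            ((integrableOn_Ioi_rpow_of_lt (by norm_num) hM0).lintegral_lt_top) hpfin
  -- conclude the sup inequality
  rcases eq_or_lt_of_le hp0 with rfl | hppos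
  · simp
  apply ENNReal.le_of_forall_pos_le_add
  intro ε hε _
  set q := max 0 (p - ε) with hqdef
  have hq0 : 0 ≤ q := le_max_left _ _
  have hqp : q < p := max_lt hppos (by
    have : (0:ℝ) < ε := hε
    linarith)
  have hmem : ENNReal.ofReal q ≤ sSup (ENNReal.ofReal ''
      {p : ℝ | 0 ≤ p ∧ (∫⁻ u in Set.Ioi (0 : ℝ),
        ENNReal.ofReal (Real.exp (p * w u)) * μ {ω | u ≤ X ω}) < ⊤}) :=
    le_sSup ⟨q, ⟨hq0, key q hq0 hqp⟩, rfl⟩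
  have hpq : p - q ≤ ε := by
    have : p - ε ≤ q := le_max_right _ _
    linarith
  calc ENNReal.ofReal p ≤ ENNReal.ofReal q + ENNReal.ofReal (p - q) := by
        rw [← ENNReal.ofReal_add hq0 (by linarith)]
        exact ENNReal.ofReal_le_ofReal (by linarith)
    _ ≤ _ + (ε : ENNReal) := by
        refine add_le_add hmem ?_
        rw [← ENNReal.ofReal_coe_nnreal]
        exact ENNReal.ofReal_le_ofReal hpq
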